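/- arXiv:2203.11409 — 10 statements merged into one kernel-verified Lean document; each statement's English description precedes it below -/
import Mathlib

section
/- Let (S, A, T, γ) be a finite MDP with γ ∈ [0,1], horizon T_h ≥ 1 and reward r : S × A → ℝ, and let Q_t, V_t (0 ≤ t ≤ T_h−1) be given by soft value iteration. Then for every time-dependent policy π (with π_t(·|s) a probability distribution on A for each t < T_h and s ∈ S) and every state s ∈ S, the entropy-regularized return satisfies E_π[ Σ_{t=0}^{T_h−1} γ^t ( r(S_t, A_t) − log π_t(A_t|S_t) ) | S_0 = s ] ≤ V_0(s), where terms with π_t(a|s) = 0 contribute 0 (convention 0·log 0 = 0). -/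
/-!
Soft value iteration is dynamic programming for the entropy-regularised objective. By Gibbs'
variational inequality `∑ₐ p a * (q a - log (p a)) ≤ log ∑ₐ exp (q a)`, at every step the
expected regularised reward of any distribution over actions is at most the log-sum-exp of the
soft `Q`-values. Backward induction over the remaining horizon, feeding the bound for the
continuation into `Q`, yields `γ ^ t * V` as an upper bound at every time `t`.
-/

/-- Soft value iteration, indexed by the number of remaining steps after the current one:
`softQ T γ r k = Q_{Th-1-k}` when the horizon is `Th`.  Thus `softQ T γ r 0 s a = r s a`
(the last step `t = Th-1`) and
`softQ T γ r (k+1) s a = r s a + γ ∑_{s'} T(s'|s,a) V(k, s')`. -/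
noncomputable def softQ {S A : Type*} [Fintype S] [Fintype A]
    (T : S → A → S → ℝ) (γ : ℝ) (r : S → A → ℝ) : ℕ → S → A → ℝ
  | 0 => fun s a => r s a
  | k + 1 => fun s a =>
      r s a + γ * ∑ s', T s a s' * Real.log (∑ a', Real.exp (softQ T γ r k s' a'))

/-- Soft state-value: `V(s) = log ∑_a exp Q(s,a)` (indexed by remaining steps). -/
noncomputable def softV {S A : Type*} [Fintype S] [Fintype A]
    (T : S → A → S → ℝ) (γ : ℝ) (r : S → A → ℝ) (k : ℕ) (s : S) : ℝ :=
  Real.log (∑ a, Real.exp (softQ T γ r k s a))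

/-- `expSum T π φ t k s` is the expectation `E_π[ ∑_{t'=t}^{t+k-1} φ t' S_{t'} A_{t'} | S_t = s ]`
over trajectories generated from state `s` at time `t` by the time-dependent policy `π`
and the transition probabilities `T`. -/
noncomputable def expSum {S A : Type*} [Fintype S] [Fintype A]
    (T : S → A → S → ℝ) (π : ℕ → S → A → ℝ) (φ : ℕ → S → A → ℝ) : ℕ → ℕ → S → ℝ
  | _, 0, _ => 0
  | t, k + 1, s => ∑ a, π t s a * (φ t s a + ∑ s', T s a s' * expSum T π φ (t + 1) k s')

open Finset

lemma mul_sub_log_le_exp_sub_add {p : ℝ} (hp : 0 ≤ p) (q c : ℝ) :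
    p * (q - Real.log p) ≤ Real.exp (q - c) - p + p * c := by
  rcases hp.eq_or_lt with rfl | hp
  · simpa using (Real.exp_pos _).le
  · have h := mul_le_mul_of_nonneg_left (Real.add_one_le_exp (q - c - Real.log p)) hp.le
    rw [Real.exp_sub _ (Real.log p), Real.exp_log hp, mul_div_cancel₀ _ hp.ne'] at h
    linarith

lemma sum_mul_sub_log_le_log_sum_exp {A : Type*} [Fintype A] (p q : A → ℝ)
    (hp0 : ∀ a, 0 ≤ p a) (hp1 : ∑ a, p a = 1) :
    ∑ a, p a * (q a - Real.log (p a)) ≤ Real.log (∑ a, Real.exp (q a)) := by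
  have hA : (univ : Finset A).Nonempty := nonempty_of_sum_ne_zero (by rw [hp1]; exact one_ne_zero)
  have hZ : 0 < ∑ a, Real.exp (q a) := sum_pos (fun a _ => Real.exp_pos _) hA
  set Z := ∑ a, Real.exp (q a) with hZdef
  calc ∑ a, p a * (q a - Real.log (p a))
      ≤ ∑ a, (Real.exp (q a - Real.log Z) - p a + p a * Real.log Z) :=
        sum_le_sum fun a _ => mul_sub_log_le_exp_sub_add (hp0 a) (q a) (Real.log Z)
    _ = Real.log Z := by
        simp only [sum_add_distrib, sum_sub_distrib, ← sum_mul, hp1, Real.exp_sub, Real.exp_log hZ,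
          ← sum_div, ← hZdef, div_self hZ.ne']
        ring

section SoftValueIteration

variable {S A : Type*} [Fintype S] [Fintype A]

noncomputable def entropyRegularizedReward (γ : ℝ) (r : S → A → ℝ) (π : ℕ → S → A → ℝ) :
    ℕ → S → A → ℝ :=
  fun t s a => γ ^ t * (r s a - Real.log (π t s a))

lemma expSum_succ_le_mul_log_sum_exp (T : S → A → S → ℝ) (π : ℕ → S → A → ℝ)
    (φ : ℕ → S → A → ℝ) (t k : ℕ) (s : S) (c : ℝ) (q : A → ℝ)
    (hπ0 : ∀ a, 0 ≤ π t s a) (hπ1 : ∑ a, π t s a = 1) (hc : 0 ≤ c)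
    (hstep : ∀ a, φ t s a + ∑ s', T s a s' * expSum T π φ (t + 1) k s'
      ≤ c * (q a - Real.log (π t s a))) :
    expSum T π φ t (k + 1) s ≤ c * Real.log (∑ a, Real.exp (q a)) :=
  calc expSum T π φ t (k + 1) s
      ≤ ∑ a, π t s a * (c * (q a - Real.log (π t s a))) :=
        sum_le_sum fun a _ => mul_le_mul_of_nonneg_left (hstep a) (hπ0 a)
    _ = c * ∑ a, π t s a * (q a - Real.log (π t s a)) := by
        rw [mul_sum]; exact sum_congr rfl fun a _ => by ring
    _ ≤ c * Real.log (∑ a, Real.exp (q a)) :=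
        mul_le_mul_of_nonneg_left (sum_mul_sub_log_le_log_sum_exp _ q hπ0 hπ1) hc

/-- `softV T γ r k` has `k` steps remaining after the current one, so it bounds a return over
`k + 1` steps. -/
theorem expSum_entropyRegularizedReward_le_softV (T : S → A → S → ℝ)
    (hT0 : ∀ s a s', 0 ≤ T s a s') {γ : ℝ} (hγ : 0 ≤ γ) (r : S → A → ℝ)
    {π : ℕ → S → A → ℝ} {Th : ℕ}
    (hπ0 : ∀ t s a, t < Th → 0 ≤ π t s a) (hπ1 : ∀ t s, t < Th → ∑ a, π t s a = 1)
    (k t : ℕ) (hk : t + k < Th) (s : S) :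
    expSum T π (entropyRegularizedReward γ r π) t (k + 1) s ≤ γ ^ t * softV T γ r k s := by
  induction k generalizing t s with
  | zero =>
    refine expSum_succ_le_mul_log_sum_exp T π _ t 0 s _ _ (fun a => hπ0 t s a (by omega))
      (hπ1 t s (by omega)) (pow_nonneg hγ t) fun a => le_of_eq ?_
    simp [expSum, entropyRegularizedReward, softQ]
  | succ k ih =>
    refine expSum_succ_le_mul_log_sum_exp T π _ t (k + 1) s _ _ (fun a => hπ0 t s a (by omega))
      (hπ1 t s (by omega)) (pow_nonneg hγ t) fun a => ?_
    have hcont : ∑ s', T s a s' * (γ ^ (t + 1) * softV T γ r k s')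
        = γ ^ (t + 1) * ∑ s', T s a s' * softV T γ r k s' := by
      rw [mul_sum]; exact sum_congr rfl fun s' _ => by ring
    calc entropyRegularizedReward γ r π t s a
          + ∑ s', T s a s' * expSum T π (entropyRegularizedReward γ r π) (t + 1) (k + 1) s'
        ≤ entropyRegularizedReward γ r π t s a
          + ∑ s', T s a s' * (γ ^ (t + 1) * softV T γ r k s') := by
          gcongr with s'
          · exact hT0 s a s'
          · exact ih (t + 1) (by omega) s'
      _ = γ ^ t * (softQ T γ r (k + 1) s a - Real.log (π t s a)) := by
          rw [hcont, softQ]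
          simp only [entropyRegularizedReward, softV]
          ring

end SoftValueIteration

theorem stmt0_general {S A : Type*} [Fintype S] [Fintype A]
    (T : S → A → S → ℝ)
    (hT0 : ∀ s a s', 0 ≤ T s a s')
    (γ : ℝ) (hγ : γ ∈ Set.Icc (0 : ℝ) 1)
    (Th : ℕ) (hTh : 1 ≤ Th) (r : S → A → ℝ)
    (π : ℕ → S → A → ℝ)
    (hπ0 : ∀ t s a, t < Th → 0 ≤ π t s a)
    (hπ1 : ∀ t s, t < Th → ∑ a, π t s a = 1)
    (s : S) :
    expSum T π (fun t s a => γ ^ t * (r s a - Real.log (π t s a))) 0 Th s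
      ≤ softV T γ r (Th - 1) s := by
  obtain ⟨k, rfl⟩ : ∃ k, Th = k + 1 := ⟨Th - 1, by omega⟩
  have h := expSum_entropyRegularizedReward_le_softV T hT0 hγ.1 r hπ0 hπ1 k 0 (by omega) s
  rwa [pow_zero, one_mul] at h

theorem stmt0 {S A : Type*} [Fintype S] [Fintype A] [Nonempty S] [Nonempty A]
    (T : S → A → S → ℝ)
    (hT0 : ∀ s a s', 0 ≤ T s a s') (hT1 : ∀ s a, ∑ s', T s a s' = 1)
    (γ : ℝ) (hγ : γ ∈ Set.Icc (0 : ℝ) 1)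
    (Th : ℕ) (hTh : 1 ≤ Th) (r : S → A → ℝ)
    (π : ℕ → S → A → ℝ)
    (hπ0 : ∀ t s a, t < Th → 0 ≤ π t s a)
    (hπ1 : ∀ t s, t < Th → ∑ a, π t s a = 1)
    (s : S) :
    expSum T π (fun t s a => γ ^ t * (r s a - Real.log (π t s a))) 0 Th s
      ≤ softV T γ r (Th - 1) s :=
  stmt0_general T hT0 γ hγ Th hTh r π hπ0 hπ1 s
end

section
/- Let (S, A, T, γ) be a finite MDP with γ ∈ [0,1], horizon T_h ≥ 1 and reward r : S × A → ℝ, and let Q_t, V_t be given by soft value iteration with soft-VI policy π^soft_t(a|s) = exp(Q_t(s,a) − V_t(s)). Then for every state s ∈ S, E_{π^soft}[ Σ_{t=0}^{T_h−1} γ^t ( r(S_t, A_t) − log π^soft_t(A_t|S_t) ) | S_0 = s ] = V_0(s); that is, the soft value function equals the entropy-regularized return of the soft-VI policy. -/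
theorem stmt1 {S A : Type*} [Fintype S] [Fintype A] [Nonempty S] [Nonempty A]
    (T : S → A → S → ℝ)
    (hT0 : ∀ s a s', 0 ≤ T s a s') (hT1 : ∀ s a, ∑ s', T s a s' = 1)
    (γ : ℝ) (hγ : γ ∈ Set.Icc (0 : ℝ) 1)
    (Th : ℕ) (hTh : 1 ≤ Th) (r : S → A → ℝ)
    -- the soft-VI policy `π^soft_t(a|s) = exp (Q_t(s,a) - V_t(s))`,
    -- where `Q_t = softQ T γ r (Th-1-t)` and `V_t = softV T γ r (Th-1-t)`
    (πsoft : ℕ → S → A → ℝ)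
    (hπsoft : ∀ t s a, t < Th →
      πsoft t s a = Real.exp (softQ T γ r (Th - 1 - t) s a - softV T γ r (Th - 1 - t) s))
    (s : S) :
    expSum T πsoft (fun t s a => γ ^ t * (r s a - Real.log (πsoft t s a))) 0 Th s
      = softV T γ r (Th - 1) s := by
  obtain ⟨hγ0, hγ1⟩ := hγ
  have hVexp : ∀ k s, Real.exp (softV T γ r k s) = ∑ a, Real.exp (softQ T γ r k s a) := by
    intro k s
    have hpos : 0 < ∑ a, Real.exp (softQ T γ r k s a) :=
      Finset.sum_pos (fun a _ => Real.exp_pos _) Finset.univ_nonempty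
    simpa [softV] using Real.exp_log hpos
  have hπsum : ∀ t s, t < Th → ∑ a, πsoft t s a = 1 := by
    intro t s ht
    calc ∑ a, πsoft t s a
        = ∑ a, Real.exp (softQ T γ r (Th-1-t) s a) * (Real.exp (softV T γ r (Th-1-t) s))⁻¹ := by
          refine Finset.sum_congr rfl (fun a _ => ?_)
          rw [hπsoft t s a ht, Real.exp_sub, div_eq_mul_inv]
      _ = 1 := by
          rw [← Finset.sum_mul, ← hVexp, mul_inv_cancel₀ (Real.exp_ne_zero _)]
  have key : ∀ k t s', t + (k+1) = Th →
      expSum T πsoft (fun t s a => γ ^ t * (r s a - Real.log (πsoft t s a))) t (k+1) s'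
        = γ ^ t * softV T γ r k s' := by
    intro k
    induction k with
    | zero =>
      intro t s' ht
      have htlt : t < Th := by omega
      have hk : Th - 1 - t = 0 := by omega
      have hlog : ∀ a, Real.log (πsoft t s' a) = r s' a - softV T γ r 0 s' := by
        intro a
        rw [hπsoft t s' a htlt, hk, Real.log_exp, softQ]
      simp only [expSum]
      have : ∀ a, πsoft t s' a * (γ ^ t * (r s' a - Real.log (πsoft t s' a)) + ∑ s'', T s' a s'' * 0)
          = πsoft t s' a * (γ ^ t * softV T γ r 0 s') := by
        intro a
        rw [hlog a]
        simp only [mul_zero, Finset.sum_const_zero, add_zero]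
        ring
      rw [Finset.sum_congr rfl (fun a _ => this a), ← Finset.sum_mul, hπsum t s' htlt, one_mul]
    | succ k ih =>
      intro t s' ht
      have htlt : t < Th := by omega
      have hk : Th - 1 - t = k + 1 := by omega
      have hlog : ∀ a, Real.log (πsoft t s' a)
          = softQ T γ r (k+1) s' a - softV T γ r (k+1) s' := by
        intro a
        rw [hπsoft t s' a htlt, hk, Real.log_exp]
      conv_lhs => rw [expSum]
      have hstep : ∀ a, πsoft t s' a *
          (γ ^ t * (r s' a - Real.log (πsoft t s' a))
            + ∑ s'', T s' a s'' *
              expSum T πsoft (fun t s a => γ ^ t * (r s a - Real.log (πsoft t s a))) (t+1) (k+1) s'')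
          = πsoft t s' a * (γ ^ t * softV T γ r (k+1) s') := by
        intro a
        congr 1
        have hihsum : ∀ s'', expSum T πsoft
            (fun t s a => γ ^ t * (r s a - Real.log (πsoft t s a))) (t+1) (k+1) s''
            = γ ^ (t+1) * softV T γ r k s'' := by
          intro s''
          exact ih (t+1) s'' (by omega)
        rw [Finset.sum_congr rfl (fun s'' _ => by rw [hihsum s'']), hlog a]
        have hQ : softQ T γ r (k+1) s' a
            = r s' a + γ * ∑ s'', T s' a s'' * softV T γ r k s'' := by
          rw [softQ]
          rfl
        rw [hQ]
        have : ∑ s'', T s' a s'' * (γ ^ (t+1) * softV T γ r k s'')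
            = γ ^ (t+1) * ∑ s'', T s' a s'' * softV T γ r k s'' := by
          rw [Finset.mul_sum]
          exact Finset.sum_congr rfl (fun s'' _ => by ring)
        rw [this]
        ring
      rw [Finset.sum_congr rfl (fun a _ => hstep a), ← Finset.sum_mul, hπsum t s' htlt, one_mul]
  obtain ⟨k, hk⟩ : ∃ k, Th = k + 1 := ⟨Th - 1, by omega⟩
  have := key k 0 s (by omega)
  rw [hk]
  simpa using this
end

section
/- Let (S, A, T, γ) be a finite MDP with γ ∈ [0,1], horizon T_h ≥ 1 and deterministic dynamics given by N : S × A → S. Let r : S × A → ℝ be any reward with soft value iteration quantities Q_t, V_t and soft-VI policy π_t(a|s) = exp(Q_t(s,a) − V_t(s)). Then for every feasible trajectory τ = (s_0, a_0, s_1, a_1, …, s_{T_h−1}, a_{T_h−1}) (i.e. s_{t+1} = N(s_t, a_t) for all t), the discounted likelihood satisfies Π_{t=0}^{T_h−1} π_t(a_t|s_t)^{γ^t} = exp( Σ_{t=0}^{T_h−1} γ^t r(s_t, a_t) ) / exp V_0(s_0); that is, the discounted likelihood of a feasible trajectory is proportional to the exponential of its discounted return, with normalising constant Z = exp V_0(s_0).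 -/
lemma softQ_succ_det {S A : Type*} [Fintype S] [Fintype A] [DecidableEq S]
    (T : S → A → S → ℝ) (γ : ℝ) (r : S → A → ℝ) (N : S → A → S)
    (hdet : ∀ s a s', T s a s' = if s' = N s a then 1 else 0)
    (k : ℕ) (s : S) (a : A) :
    softQ T γ r (k + 1) s a = r s a + γ * softV T γ r k (N s a) := by
  simp [softQ, softV, hdet, ite_mul]

lemma key_sum {S A : Type*} [Fintype S] [Fintype A] [DecidableEq S]
    (T : S → A → S → ℝ) (γ : ℝ) (r : S → A → ℝ) (N : S → A → S)
    (hdet : ∀ s a s', T s a s' = if s' = N s a then 1 else 0) :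
    ∀ n, 1 ≤ n → ∀ (σs : ℕ → S) (as : ℕ → A),
      (∀ t, t + 1 < n → σs (t + 1) = N (σs t) (as t)) →
      ∑ t ∈ Finset.range n, γ ^ t *
          (softQ T γ r (n - 1 - t) (σs t) (as t) - softV T γ r (n - 1 - t) (σs t))
        = ∑ t ∈ Finset.range n, γ ^ t * r (σs t) (as t) - softV T γ r (n - 1) (σs 0) := by
  intro n
  induction n with
  | zero => intro h; omega
  | succ m IH =>
    intro _ σs as hfeas
    rcases Nat.eq_zero_or_pos m with hm | hm
    · subst hm
      simp [softQ]
    · have hpeel := Finset.sum_range_succ' (fun t => γ ^ t *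
          (softQ T γ r (m + 1 - 1 - t) (σs t) (as t) - softV T γ r (m + 1 - 1 - t) (σs t))) m
      rw [hpeel]
      have hsub : ∀ t : ℕ, m + 1 - 1 - (t + 1) = m - 1 - t := by intro t; omega
      have hIH := IH hm (fun t => σs (t + 1)) (fun t => as (t + 1))
        (fun t ht => hfeas (t + 1) (by omega))
      have htail : ∑ t ∈ Finset.range m, γ ^ (t + 1) *
            (softQ T γ r (m + 1 - 1 - (t + 1)) (σs (t + 1)) (as (t + 1))
              - softV T γ r (m + 1 - 1 - (t + 1)) (σs (t + 1)))
          = γ * (∑ t ∈ Finset.range m, γ ^ t * r (σs (t + 1)) (as (t + 1))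
              - softV T γ r (m - 1) (σs 1)) := by
        rw [← hIH, Finset.mul_sum]
        refine Finset.sum_congr rfl fun t _ => ?_
        rw [hsub]; ring
      rw [htail]
      -- head term
      obtain ⟨p, rfl⟩ : ∃ p, m = p + 1 := ⟨m - 1, by omega⟩
      have hval : softQ T γ r (p + 1 + 1 - 1 - 0) (σs 0) (as 0)
          = r (σs 0) (as 0) + γ * softV T γ r p (σs 1) := by
        have : p + 1 + 1 - 1 - 0 = p + 1 := by omega
        rw [this, softQ_succ_det T γ r N hdet, ← hfeas 0 (by omega)]
      rw [hval]
      have hpeel2 := Finset.sum_range_succ' (fun t => γ ^ t * r (σs t) (as t)) (p + 1)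
      rw [hpeel2]
      have h1 : p + 1 - 1 = p := by omega
      have h2 : p + 1 + 1 - 1 - 0 = p + 1 := by omega
      have h2' : p + 1 + 1 - 1 = p + 1 := by omega
      rw [h1, h2, h2']
      have h3 : ∑ t ∈ Finset.range (p + 1), γ ^ (t + 1) * r (σs (t + 1)) (as (t + 1))
          = γ * ∑ t ∈ Finset.range (p + 1), γ ^ t * r (σs (t + 1)) (as (t + 1)) := by
        rw [Finset.mul_sum]; refine Finset.sum_congr rfl fun t _ => ?_; ring
      rw [h3]
      ring

theorem stmt4 {S A : Type*} [Fintype S] [Fintype A] [DecidableEq S] [Nonempty S] [Nonempty A]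
    (T : S → A → S → ℝ)
    (hT0 : ∀ s a s', 0 ≤ T s a s') (hT1 : ∀ s a, ∑ s', T s a s' = 1)
    (γ : ℝ) (hγ : γ ∈ Set.Icc (0 : ℝ) 1)
    (Th : ℕ) (hTh : 1 ≤ Th) (r : S → A → ℝ)
    -- deterministic dynamics given by `N`
    (N : S → A → S) (hdet : ∀ s a s', T s a s' = if s' = N s a then 1 else 0)
    -- a feasible trajectory `(σs 0, as 0, σs 1, as 1, …, σs (Th-1), as (Th-1))`
    (σs : ℕ → S) (as : ℕ → A)
    (hfeas : ∀ t, t + 1 < Th → σs (t + 1) = N (σs t) (as t)) :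
    -- `∏_t π_t(a_t|s_t)^{γ^t} = exp(∑_t γ^t r(s_t,a_t)) / exp V_0(s_0)`,
    -- where `π_t(a|s) = exp (Q_t(s,a) - V_t(s))` is the soft-VI policy
    ∏ t ∈ Finset.range Th,
        (Real.exp (softQ T γ r (Th - 1 - t) (σs t) (as t)
          - softV T γ r (Th - 1 - t) (σs t))) ^ (γ ^ t)
      = Real.exp (∑ t ∈ Finset.range Th, γ ^ t * r (σs t) (as t))
          / Real.exp (softV T γ r (Th - 1) (σs 0)) := by
  have hkey := key_sum T γ r N hdet Th hTh σs as hfeas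
  have hpow : ∀ t ∈ Finset.range Th,
      (Real.exp (softQ T γ r (Th - 1 - t) (σs t) (as t)
        - softV T γ r (Th - 1 - t) (σs t))) ^ (γ ^ t)
      = Real.exp (γ ^ t * (softQ T γ r (Th - 1 - t) (σs t) (as t)
          - softV T γ r (Th - 1 - t) (σs t))) := by
    intro t _
    rw [Real.rpow_def_of_pos (Real.exp_pos _), Real.log_exp, mul_comm]
  rw [Finset.prod_congr rfl hpow, ← Real.exp_sum, hkey, Real.exp_sub]
end

section
/- Let (S, A, T, γ) be a finite MDP with γ ∈ [0,1). Let r, r' : S × A × S → ℝ be rewards related by r'(s,a,s') = λ( r(s,a,s') + γφ(s') − φ(s) ) for some λ > 0 and potential function φ : S → ℝ. Let Q and Q' be the unique fixed points of the hard Bellman optimality operators for r and r' respectively. Then Q'(s,a) = λ( Q(s,a) − φ(s) ) for all (s,a), and consequently for every state s the set of optimal actions is unchanged: { a ∈ A : Q'(s,a) = max_{a'} Q'(s,a') } = { a ∈ A : Q(s,a) = max_{a'} Q(s,a') }. -/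
/-!
The optimal Q-function is the unique fixed point of the Bellman operator, which is a
`γ`-contraction for the sup norm because `⨆` is 1-Lipschitz and `T s a` is a probability
vector. So it suffices to check that `λ (Q - φ)` is a fixed point of the operator for the
shaped reward: the shaping terms `γ φ(s')` cancel against `γ ⨆ λ (Q(s', ·) - φ(s'))`, and
`- φ(s)` comes out of the expectation because `∑ T(s'|s,a) = 1`. Positive affine maps preserve
argmax sets.
-/

open Function

section ciSup

variable {A : Type*} [Fintype A] [Nonempty A]

lemma dist_ciSup_le_dist (f g : A → ℝ) : dist (⨆ a, f a) (⨆ a, g a) ≤ dist f g := by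
  have key : ∀ f g : A → ℝ, (⨆ a, f a) ≤ (⨆ a, g a) + dist f g := fun f g =>
    ciSup_le fun a => calc
      f a ≤ g a + dist (f a) (g a) := by linarith [Real.sub_le_dist (f a) (g a)]
      _ ≤ (⨆ a, g a) + dist f g :=
        add_le_add (le_ciSup (Set.finite_range g).bddAbove a) (dist_le_pi_dist f g a)
  rw [Real.dist_eq, abs_sub_le_iff]
  constructor
  · linarith [key f g]
  · linarith [key g f, dist_comm f g]

lemma ciSup_mul_sub {c : ℝ} (hc : 0 ≤ c) (f : A → ℝ) (b : ℝ) :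
    ⨆ a, c * (f a - b) = c * ((⨆ a, f a) - b) := by
  have h := (OrderIso.subRight b).map_ciSup (Set.finite_range f).bddAbove
  simp only [OrderIso.subRight_apply] at h
  rw [h, Real.mul_iSup_of_nonneg hc]

lemma setOf_mul_sub_eq_ciSup {c : ℝ} (hc : 0 < c) (f : A → ℝ) (b : ℝ) :
    {a | c * (f a - b) = ⨆ a', c * (f a' - b)} = {a | f a = ⨆ a', f a'} := by
  ext a
  simp only [Set.mem_ofPred_eq, ciSup_mul_sub hc.le, mul_right_inj' hc.ne', sub_left_inj]

end ciSup

section Bellman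

variable {S A : Type*} [Fintype S] [Fintype A] [Nonempty A]

noncomputable def bellman (T r : S → A → S → ℝ) (γ : ℝ) (Q : S → A → ℝ) : S → A → ℝ :=
  fun s a => ∑ s', T s a s' * (r s a s' + γ * ⨆ a', Q s' a')

variable {T : S → A → S → ℝ} {γ : ℝ}

lemma dist_bellman_le (hT0 : ∀ s a s', 0 ≤ T s a s') (hT1 : ∀ s a, ∑ s', T s a s' = 1)
    (hγ0 : 0 ≤ γ) (r : S → A → S → ℝ) (Q₁ Q₂ : S → A → ℝ) :
    dist (bellman T r γ Q₁) (bellman T r γ Q₂) ≤ γ * dist Q₁ Q₂ := by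
  refine (dist_pi_le_iff (by positivity)).2 fun s => (dist_pi_le_iff (by positivity)).2 fun a => ?_
  calc dist (bellman T r γ Q₁ s a) (bellman T r γ Q₂ s a)
      = |∑ s', T s a s' * (γ * ((⨆ a', Q₁ s' a') - ⨆ a', Q₂ s' a'))| := by
        rw [Real.dist_eq, bellman, bellman, ← Finset.sum_sub_distrib]
        congr 1
        refine Finset.sum_congr rfl fun s' _ => ?_
        ring
    _ ≤ ∑ s', T s a s' * (γ * dist Q₁ Q₂) := by
        refine (Finset.abs_sum_le_sum_abs _ _).trans (Finset.sum_le_sum fun s' _ => ?_)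
        rw [abs_mul, abs_mul, abs_of_nonneg (hT0 s a s'), abs_of_nonneg hγ0, ← Real.dist_eq]
        gcongr
        · exact hT0 s a s'
        · exact (dist_ciSup_le_dist _ _).trans (dist_le_pi_dist Q₁ Q₂ s')
    _ = γ * dist Q₁ Q₂ := by rw [← Finset.sum_mul, hT1, one_mul]

lemma bellman_fixedPoint_unique (hT0 : ∀ s a s', 0 ≤ T s a s')
    (hT1 : ∀ s a, ∑ s', T s a s' = 1) (hγ0 : 0 ≤ γ) (hγ1 : γ < 1) (r : S → A → S → ℝ)
    {Q₁ Q₂ : S → A → ℝ} (h₁ : IsFixedPt (bellman T r γ) Q₁)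
    (h₂ : IsFixedPt (bellman T r γ) Q₂) :
    Q₁ = Q₂ :=
  have hcontr : ContractingWith ⟨γ, hγ0⟩ (bellman T r γ) :=
    ⟨hγ1, LipschitzWith.of_dist_le_mul (dist_bellman_le hT0 hT1 hγ0 r)⟩
  hcontr.fixedPoint_unique' h₁ h₂

lemma isFixedPt_bellman_shaping (hT1 : ∀ s a, ∑ s', T s a s' = 1) {r : S → A → S → ℝ}
    {lam : ℝ} (hlam : 0 ≤ lam) (φ : S → ℝ) {Q : S → A → ℝ}
    (hQ : IsFixedPt (bellman T r γ) Q) :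
    IsFixedPt (bellman T (fun s a s' => lam * (r s a s' + γ * φ s' - φ s)) γ)
      (fun s a => lam * (Q s a - φ s)) := by
  funext s a
  calc ∑ s', T s a s' *
          (lam * (r s a s' + γ * φ s' - φ s) + γ * ⨆ a', lam * (Q s' a' - φ s'))
      = lam * (∑ s', T s a s' * (r s a s' + γ * ⨆ a', Q s' a'))
          - lam * φ s * ∑ s', T s a s' := by
        simp only [ciSup_mul_sub hlam, Finset.mul_sum, ← Finset.sum_sub_distrib]
        refine Finset.sum_congr rfl fun s' _ => ?_
        ring
    _ = lam * (Q s a - φ s) := by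
        rw [hT1, mul_one, ← mul_sub]
        exact congrArg (fun q => lam * (q - φ s)) (congrFun₂ hQ s a)

end Bellman

theorem stmt5_general {S A : Type*} [Fintype S] [Fintype A] [Nonempty A]
    (T : S → A → S → ℝ)
    (hT0 : ∀ s a s', 0 ≤ T s a s') (hT1 : ∀ s a, ∑ s', T s a s' = 1)
    (γ : ℝ) (hγ0 : 0 ≤ γ) (hγ1 : γ < 1)
    (r r' : S → A → S → ℝ)
    (lam : ℝ) (hlam : 0 < lam) (φ : S → ℝ)
    (hshape : ∀ s a s', r' s a s' = lam * (r s a s' + γ * φ s' - φ s))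
    -- `Q` and `Q'` are the (unique) fixed points of the hard Bellman optimality
    -- operators for `r` and `r'` respectively
    (Q Q' : S → A → ℝ)
    (hQ : ∀ s a, Q s a = ∑ s', T s a s' * (r s a s' + γ * ⨆ a', Q s' a'))
    (hQ' : ∀ s a, Q' s a = ∑ s', T s a s' * (r' s a s' + γ * ⨆ a', Q' s' a')) :
    (∀ s a, Q' s a = lam * (Q s a - φ s)) ∧
    (∀ s : S, {a : A | Q' s a = ⨆ a', Q' s a'} = {a : A | Q s a = ⨆ a', Q s a'}) := by
  obtain rfl : r' = fun s a s' => lam * (r s a s' + γ * φ s' - φ s) := funext₃ hshape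
  have hfix : IsFixedPt (bellman T r γ) Q := funext₂ fun s a => (hQ s a).symm
  have hfix' : IsFixedPt (bellman T _ γ) Q' := funext₂ fun s a => (hQ' s a).symm
  obtain rfl : Q' = fun s a => lam * (Q s a - φ s) :=
    bellman_fixedPoint_unique hT0 hT1 hγ0 hγ1 _ hfix'
      (isFixedPt_bellman_shaping hT1 hlam.le φ hfix)
  exact ⟨fun _ _ => rfl, fun s => setOf_mul_sub_eq_ciSup hlam (Q s) (φ s)⟩

theorem stmt5 {S A : Type*} [Fintype S] [Fintype A] [Nonempty S] [Nonempty A]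
    (T : S → A → S → ℝ)
    (hT0 : ∀ s a s', 0 ≤ T s a s') (hT1 : ∀ s a, ∑ s', T s a s' = 1)
    (γ : ℝ) (hγ0 : 0 ≤ γ) (hγ1 : γ < 1)
    (r r' : S → A → S → ℝ)
    (lam : ℝ) (hlam : 0 < lam) (φ : S → ℝ)
    (hshape : ∀ s a s', r' s a s' = lam * (r s a s' + γ * φ s' - φ s))
    -- `Q` and `Q'` are the (unique) fixed points of the hard Bellman optimality
    -- operators for `r` and `r'` respectively
    (Q Q' : S → A → ℝ)
    (hQ : ∀ s a, Q s a = ∑ s', T s a s' * (r s a s' + γ * ⨆ a', Q s' a'))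
    (hQ' : ∀ s a, Q' s a = ∑ s', T s a s' * (r' s a s' + γ * ⨆ a', Q' s' a')) :
    (∀ s a, Q' s a = lam * (Q s a - φ s)) ∧
    (∀ s : S, {a : A | Q' s a = ⨆ a', Q' s a'} = {a : A | Q s a = ⨆ a', Q s a'}) :=
  stmt5_general T hT0 hT1 γ hγ0 hγ1 r r' lam hlam φ hshape Q Q' hQ hQ'
end

section
/- Let (S, A, T, γ) be a finite MDP and let r : S × A × S → ℝ. The soft Bellman operator B_r, mapping Q : S × A → ℝ to (B_r Q)(s,a) = Σ_{s'} T(s'|s,a) ( r(s,a,s') + γ log Σ_{a'∈A} exp Q(s',a') ), is a γ-contraction with respect to the sup norm: for all Q, Q' : S × A → ℝ, ‖B_r Q − B_r Q'‖_∞ ≤ γ ‖Q − Q'‖_∞. Consequently, if γ ∈ [0,1) then B_r has a unique fixed point Q^soft_r (soft value iteration converges). -/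
/-! STATEMENT 7: the soft Bellman operator is a `γ`-contraction in the sup norm on
`S × A → ℝ`, and consequently has a unique fixed point when `γ ∈ [0,1)`. -/

/-- The soft Bellman operator
`(B_r Q)(s,a) = ∑_{s'} T(s'|s,a) (r(s,a,s') + γ log ∑_{a'} exp Q(s',a'))`. -/
noncomputable def softBellman {S A : Type*} [Fintype S] [Fintype A]
    (T : S → A → S → ℝ) (γ : ℝ) (r : S → A → S → ℝ)
    (Q : S × A → ℝ) : S × A → ℝ :=
  fun p => ∑ s', T p.1 p.2 s' * (r p.1 p.2 s' + γ * Real.log (∑ a', Real.exp (Q (s', a'))))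

private lemma lse_le {S A : Type*} [Fintype S] [Fintype A] [Nonempty A]
    (Q Q' : S × A → ℝ) (s' : S) :
    Real.log (∑ a', Real.exp (Q (s', a'))) ≤
      Real.log (∑ a', Real.exp (Q' (s', a'))) + ‖Q - Q'‖ := by
  have hpos : (0:ℝ) < ∑ a', Real.exp (Q' (s', a')) :=
    Finset.sum_pos (fun a _ => Real.exp_pos _) Finset.univ_nonempty
  have hle : (∑ a', Real.exp (Q (s', a'))) ≤
      (∑ a', Real.exp (Q' (s', a'))) * Real.exp ‖Q - Q'‖ := by
    rw [Finset.sum_mul]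
    refine Finset.sum_le_sum fun a _ => ?_
    rw [← Real.exp_add]
    apply Real.exp_le_exp.2
    have := norm_le_pi_norm (Q - Q') (s', a)
    simp only [Pi.sub_apply, Real.norm_eq_abs] at this
    have := abs_le.1 this
    linarith [this.2]
  calc Real.log (∑ a', Real.exp (Q (s', a')))
      ≤ Real.log ((∑ a', Real.exp (Q' (s', a'))) * Real.exp ‖Q - Q'‖) :=
        Real.log_le_log (Finset.sum_pos (fun a _ => Real.exp_pos _) Finset.univ_nonempty) hle
    _ = Real.log (∑ a', Real.exp (Q' (s', a'))) + ‖Q - Q'‖ := by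
        rw [Real.log_mul (ne_of_gt hpos) (Real.exp_ne_zero _), Real.log_exp]

private lemma lse_abs {S A : Type*} [Fintype S] [Fintype A] [Nonempty A]
    (Q Q' : S × A → ℝ) (s' : S) :
    |Real.log (∑ a', Real.exp (Q (s', a'))) - Real.log (∑ a', Real.exp (Q' (s', a')))|
      ≤ ‖Q - Q'‖ := by
  rw [abs_sub_le_iff]
  constructor
  · linarith [lse_le Q Q' s']
  · have := lse_le Q' Q s'
    rw [show Q' - Q = -(Q - Q') by ring, norm_neg] at this
    linarith

theorem stmt7 {S A : Type*} [Fintype S] [Fintype A] [Nonempty S] [Nonempty A]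
    (T : S → A → S → ℝ)
    (hT0 : ∀ s a s', 0 ≤ T s a s') (hT1 : ∀ s a, ∑ s', T s a s' = 1)
    (γ : ℝ) (hγ0 : 0 ≤ γ) (hγ1 : γ ≤ 1)
    (r : S → A → S → ℝ) :
    -- γ-contraction in the sup norm (the norm on the Pi type `S × A → ℝ` is the sup norm)
    (∀ Q Q' : S × A → ℝ,
      ‖softBellman T γ r Q - softBellman T γ r Q'‖ ≤ γ * ‖Q - Q'‖) ∧
    -- hence a unique fixed point when γ < 1
    (γ < 1 → ∃! Q : S × A → ℝ, softBellman T γ r Q = Q) := by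
  have key : ∀ Q Q' : S × A → ℝ,
      ‖softBellman T γ r Q - softBellman T γ r Q'‖ ≤ γ * ‖Q - Q'‖ := by
    intro Q Q'
    have hnn : 0 ≤ γ * ‖Q - Q'‖ := mul_nonneg hγ0 (norm_nonneg _)
    rw [pi_norm_le_iff_of_nonneg hnn]
    intro p
    simp only [Pi.sub_apply, softBellman, Real.norm_eq_abs]
    rw [← Finset.sum_sub_distrib]
    have heq : ∀ s' : S, T p.1 p.2 s' *
          (r p.1 p.2 s' + γ * Real.log (∑ a', Real.exp (Q (s', a')))) -
        T p.1 p.2 s' * (r p.1 p.2 s' + γ * Real.log (∑ a', Real.exp (Q' (s', a')))) =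
        T p.1 p.2 s' * γ * (Real.log (∑ a', Real.exp (Q (s', a'))) -
          Real.log (∑ a', Real.exp (Q' (s', a')))) := fun s' => by ring
    calc |∑ s', (T p.1 p.2 s' *
          (r p.1 p.2 s' + γ * Real.log (∑ a', Real.exp (Q (s', a')))) -
        T p.1 p.2 s' * (r p.1 p.2 s' + γ * Real.log (∑ a', Real.exp (Q' (s', a')))))|
        ≤ ∑ s', |T p.1 p.2 s' * γ * (Real.log (∑ a', Real.exp (Q (s', a'))) -
          Real.log (∑ a', Real.exp (Q' (s', a'))))| := by
          rw [Finset.sum_congr rfl (fun s' _ => heq s')]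
          exact Finset.abs_sum_le_sum_abs _ _
      _ ≤ ∑ s', T p.1 p.2 s' * γ * ‖Q - Q'‖ := by
          refine Finset.sum_le_sum fun s' _ => ?_
          rw [abs_mul, abs_of_nonneg (mul_nonneg (hT0 _ _ _) hγ0)]
          exact mul_le_mul_of_nonneg_left (lse_abs Q Q' s')
            (mul_nonneg (hT0 _ _ _) hγ0)
      _ = γ * ‖Q - Q'‖ := by
          simp only [mul_assoc, ← Finset.sum_mul, hT1 p.1 p.2, one_mul]
  refine ⟨key, fun hγ => ?_⟩
  have hlip : LipschitzWith γ.toNNReal (softBellman T γ r) := by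
    apply LipschitzWith.of_dist_le_mul
    intro Q Q'
    rw [dist_eq_norm, dist_eq_norm]
    simpa [Real.coe_toNNReal γ hγ0] using key Q Q'
  have hcontr : ContractingWith γ.toNNReal (softBellman T γ r) := by
    refine ⟨?_, hlip⟩
    rwa [← NNReal.coe_lt_one, Real.coe_toNNReal γ hγ0]
  refine ⟨hcontr.fixedPoint (softBellman T γ r), hcontr.fixedPoint_isFixedPt, ?_⟩
  intro Q hQ
  exact hcontr.fixedPoint_unique hQ
end

section
/- Let (S, A, T, γ) be a finite MDP with γ ∈ [0,1) and deterministic dynamics given by N : S × A → S, and let r : S × A × S → ℝ be a reward. Define f : S × A → ℝ by f(s,a) = A^soft_r(s,a), and regard f itself as a (state-action) reward whose soft Bellman operator maps Q to (B_f Q)(s,a) = f(s,a) + γ log Σ_{a'} exp Q(N(s,a), a'). Then the soft advantage of f equals f: A^soft_f(s,a) = f(s,a) for all (s,a). In other words, the soft advantage function is idempotent under the soft advantage operator in deterministic MDPs. -/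
/-! STATEMENT 10: in a deterministic MDP, the soft advantage function is idempotent under the
soft advantage operator: taking `f = A^soft_r` as a state-action reward, `A^soft_f = f`. -/

theorem stmt10 {S A : Type*} [Fintype S] [Fintype A] [DecidableEq S] [Nonempty S] [Nonempty A]
    (T : S → A → S → ℝ)
    (hT0 : ∀ s a s', 0 ≤ T s a s') (hT1 : ∀ s a, ∑ s', T s a s' = 1)
    (γ : ℝ) (hγ0 : 0 ≤ γ) (hγ1 : γ < 1)
    -- deterministic dynamics given by `N`
    (N : S → A → S) (hdet : ∀ s a s', T s a s' = if s' = N s a then 1 else 0)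
    (r : S → A → S → ℝ)
    -- `Qr` is the (unique) fixed point of the soft Bellman operator for `r`
    (Qr : S → A → ℝ)
    (hQr : ∀ s a, Qr s a
      = ∑ s', T s a s' * (r s a s' + γ * Real.log (∑ a', Real.exp (Qr s' a'))))
    -- `f = A^soft_r`
    (f : S → A → ℝ)
    (hfdef : ∀ s a, f s a = Qr s a - Real.log (∑ a', Real.exp (Qr s a')))
    -- `Qf` is the (unique) fixed point of the soft Bellman operator for the
    -- state-action reward `f`: `(B_f Q)(s,a) = f(s,a) + γ log ∑_{a'} exp Q(N(s,a),a')`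
    (Qf : S → A → ℝ)
    (hQf : ∀ s a, Qf s a = f s a + γ * Real.log (∑ a', Real.exp (Qf (N s a) a'))) :
    -- then `A^soft_f = f`
    ∀ s a, Qf s a - Real.log (∑ a', Real.exp (Qf s a')) = f s a := by

  classical
  set W : S → ℝ := fun s => Real.log (∑ a, Real.exp (Qf s a)) with hW
  have hsum1 : ∀ s : S, (∑ a, Real.exp (f s a)) = 1 := by
    intro s
    have hpos : 0 < ∑ a', Real.exp (Qr s a') :=
      Finset.sum_pos (fun a _ => Real.exp_pos _) Finset.univ_nonempty
    have hexp : ∀ a : A, Real.exp (f s a)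
        = Real.exp (Qr s a) / (∑ a', Real.exp (Qr s a')) := by
      intro a
      rw [hfdef, Real.exp_sub, Real.exp_log hpos]
    simp_rw [hexp]
    rw [← Finset.sum_div, div_self (ne_of_gt hpos)]
  have hQf' : ∀ s a, Qf s a = f s a + γ * W (N s a) := fun s a => hQf s a
  obtain ⟨s0, _, hs0⟩ :=
    Finset.exists_max_image Finset.univ (fun s => |W s|) Finset.univ_nonempty
  set M := |W s0| with hM
  have hMnn : 0 ≤ M := abs_nonneg _
  have hbound : ∀ s, |W s| ≤ γ * M := by
    intro s
    have hposQf : 0 < ∑ a, Real.exp (Qf s a) :=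
      Finset.sum_pos (fun a _ => Real.exp_pos _) Finset.univ_nonempty
    have hub : ∑ a, Real.exp (Qf s a) ≤ Real.exp (γ * M) := by
      calc ∑ a, Real.exp (Qf s a) ≤ ∑ a, Real.exp (f s a + γ * M) := by
            apply Finset.sum_le_sum
            intro a _
            apply Real.exp_le_exp.mpr
            rw [hQf' s a]
            have h1 := hs0 (N s a) (Finset.mem_univ _)
            have h2 := le_abs_self (W (N s a))
            nlinarith
        _ = Real.exp (γ * M) := by
            simp_rw [Real.exp_add]
            rw [← Finset.sum_mul, hsum1, one_mul]
    have hlb : Real.exp (-(γ * M)) ≤ ∑ a, Real.exp (Qf s a) := by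
      calc Real.exp (-(γ * M)) = ∑ a, Real.exp (f s a + -(γ * M)) := by
            simp_rw [Real.exp_add]
            rw [← Finset.sum_mul, hsum1, one_mul]
        _ ≤ ∑ a, Real.exp (Qf s a) := by
            apply Finset.sum_le_sum
            intro a _
            apply Real.exp_le_exp.mpr
            rw [hQf' s a]
            have h1 := hs0 (N s a) (Finset.mem_univ _)
            have h2 := neg_abs_le (W (N s a))
            nlinarith
    rw [abs_le]
    constructor
    · have := Real.log_le_log (Real.exp_pos _) hlb
      rw [Real.log_exp] at this
      simpa [hW] using this
    · have := Real.log_le_log hposQf hub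
      rw [Real.log_exp] at this
      simpa [hW] using this
  have hM0 : M = 0 := by
    have := hbound s0
    rw [← hM] at this
    nlinarith
  have hWzero : ∀ s, W s = 0 := by
    intro s
    have h := hbound s
    rw [hM0, mul_zero] at h
    have := abs_nonneg (W s)
    have : |W s| = 0 := le_antisymm h (abs_nonneg _)
    exact abs_eq_zero.mp this
  intro s a
  have : Real.log (∑ a', Real.exp (Qf s a')) = W s := rfl
  rw [this, hWzero s, hQf' s a, hWzero (N s a)]
  ring
end

section
/- Let (S, A, T, γ) be a finite MDP with γ ∈ [0,1) and deterministic dynamics given by N : S × A → S. Let r, r' : S × A × S → ℝ be rewards whose soft advantages agree everywhere: A^soft_{r'}(s,a) = A^soft_r(s,a) for all (s,a). Define f : S → ℝ by f(s) = V^soft_r(s) − V^soft_{r'}(s). Then for every feasible transition, i.e. every (s,a) with s' = N(s,a), we have r'(s,a,s') = r(s,a,s') − f(s) + γ f(s'); that is, on feasible transitions r' is a potential-shaped version of r with potential f. -/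
/-! STATEMENT 11: in a deterministic MDP, if two rewards have equal soft advantages everywhere,
then on feasible transitions `r'` is a potential-shaped version of `r` with potential
`f(s) = V^soft_r(s) − V^soft_{r'}(s)`. -/

theorem stmt11 {S A : Type*} [Fintype S] [Fintype A] [DecidableEq S] [Nonempty S] [Nonempty A]
    (T : S → A → S → ℝ)
    (hT0 : ∀ s a s', 0 ≤ T s a s') (hT1 : ∀ s a, ∑ s', T s a s' = 1)
    (γ : ℝ) (hγ0 : 0 ≤ γ) (hγ1 : γ < 1)
    -- deterministic dynamics given by `N`
    (N : S → A → S) (hdet : ∀ s a s', T s a s' = if s' = N s a then 1 else 0)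
    (r r' : S → A → S → ℝ)
    -- `Qr` and `Qr'` are the (unique) fixed points of the soft Bellman operators
    (Qr Qr' : S → A → ℝ)
    (hQr : ∀ s a, Qr s a
      = ∑ s', T s a s' * (r s a s' + γ * Real.log (∑ a', Real.exp (Qr s' a'))))
    (hQr' : ∀ s a, Qr' s a
      = ∑ s', T s a s' * (r' s a s' + γ * Real.log (∑ a', Real.exp (Qr' s' a'))))
    -- soft advantages agree everywhere: `A^soft_{r'}(s,a) = A^soft_r(s,a)`
    (hadv : ∀ s a, Qr' s a - Real.log (∑ a', Real.exp (Qr' s a'))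
      = Qr s a - Real.log (∑ a', Real.exp (Qr s a')))
    -- the potential `f(s) = V^soft_r(s) − V^soft_{r'}(s)`
    (f : S → ℝ)
    (hfdef : ∀ s, f s = Real.log (∑ a', Real.exp (Qr s a'))
      - Real.log (∑ a', Real.exp (Qr' s a'))) :
    -- on every feasible transition `(s, a, N s a)`:
    ∀ s a, r' s a (N s a) = r s a (N s a) - f s + γ * f (N s a) := by
  intro s a
  have hQ : Qr s a = r s a (N s a) + γ * Real.log (∑ a', Real.exp (Qr (N s a) a')) := by
    rw [hQr s a]
    simp [hdet, Finset.sum_ite_eq', ite_mul]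
  have hQ' : Qr' s a = r' s a (N s a) + γ * Real.log (∑ a', Real.exp (Qr' (N s a) a')) := by
    rw [hQr' s a]
    simp [hdet, Finset.sum_ite_eq', ite_mul]
  have h := hadv s a
  have hfs := hfdef s
  have hfn := hfdef (N s a)
  nlinarith [hQ, hQ', h, hfs, hfn]
end

section
/- Let (S, A, T, γ) be a finite MDP with γ ∈ (0,1), deterministic dynamics given by N : S × A → S, and decomposable transition dynamics. Let r, r' : S → ℝ be state-only rewards (interpreted as rewards r(s,a,s') = r(s) depending only on the current state) that induce the same soft-optimal policy, i.e. A^soft_{r'}(s,a) = A^soft_r(s,a) for all (s,a). Then there exists a constant k ∈ ℝ such that r'(s) = r(s) + k for all s ∈ S. -/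
/-! STATEMENT 12: in a deterministic, decomposable finite MDP with `γ ∈ (0,1)`, two
state-only rewards inducing the same soft-optimal policy differ by a constant. -/

/-- `u` and `v` are 1-step linked under `T`: there are a state `s` and actions `a, b`
with `T(u|s,a) > 0` and `T(v|s,b) > 0`. -/
def OneStepLinked {S A : Type*} (T : S → A → S → ℝ) (u v : S) : Prop :=
  ∃ (s : S) (a b : A), 0 < T s a u ∧ 0 < T s b v

/-- `u` and `v` are linked under `T`: they are `n`-step linked for some `n`, where
`u, v` are `(n+1)`-step linked if they are `n`-step linked or some intermediate `s`
is such that `u` is `n`-step linked to `s` and `s` is 1-step linked to `v`. -/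
inductive Linked {S A : Type*} (T : S → A → S → ℝ) : S → S → Prop
  | base {u v : S} : OneStepLinked T u v → Linked T u v
  | step {u s v : S} : Linked T u s → OneStepLinked T s v → Linked T u v

/-- Transition dynamics are decomposable if all pairs of states are linked. -/
def Decomposable {S A : Type*} (T : S → A → S → ℝ) : Prop :=
  ∀ u v : S, Linked T u v

theorem stmt12 {S A : Type*} [Fintype S] [Fintype A] [DecidableEq S] [Nonempty S] [Nonempty A]
    (T : S → A → S → ℝ)
    (hT0 : ∀ s a s', 0 ≤ T s a s') (hT1 : ∀ s a, ∑ s', T s a s' = 1)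
    (γ : ℝ) (hγ0 : 0 < γ) (hγ1 : γ < 1)
    -- deterministic dynamics given by `N`
    (N : S → A → S) (hdet : ∀ s a s', T s a s' = if s' = N s a then 1 else 0)
    -- decomposable dynamics
    (hdec : Decomposable T)
    -- state-only rewards, viewed as `r(s,a,s') = r(s)`
    (r r' : S → ℝ)
    -- `Qr` and `Qr'` are the (unique) fixed points of the soft Bellman operators
    (Qr Qr' : S → A → ℝ)
    (hQr : ∀ s a, Qr s a
      = ∑ s', T s a s' * (r s + γ * Real.log (∑ a', Real.exp (Qr s' a'))))
    (hQr' : ∀ s a, Qr' s a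
      = ∑ s', T s a s' * (r' s + γ * Real.log (∑ a', Real.exp (Qr' s' a'))))
    -- the two rewards induce the same soft-optimal policy:
    -- `A^soft_{r'}(s,a) = A^soft_r(s,a)` for all `(s,a)`
    (hadv : ∀ s a, Qr' s a - Real.log (∑ a', Real.exp (Qr' s a'))
      = Qr s a - Real.log (∑ a', Real.exp (Qr s a'))) :
    ∃ k : ℝ, ∀ s, r' s = r s + k := by
  classical
  set V : S → ℝ := fun s => Real.log (∑ a, Real.exp (Qr s a)) with hVdef
  set V' : S → ℝ := fun s => Real.log (∑ a, Real.exp (Qr' s a)) with hV'def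
  have hQ : ∀ s a, Qr s a = r s + γ * V (N s a) := by
    intro s a
    have h := hQr s a
    simpa [hdet, ite_mul, V] using h
  have hQ' : ∀ s a, Qr' s a = r' s + γ * V' (N s a) := by
    intro s a
    have h := hQr' s a
    simpa [hdet, ite_mul, V'] using h
  set Φ : S → ℝ := fun s => V' s - V s with hΦdef
  have hdiff : ∀ s a, Qr' s a - Qr s a = Φ s := by
    intro s a
    have h := hadv s a
    simp only [Φ, V, V']
    linarith
  have key : ∀ s a, Φ s = (r' s - r s) + γ * Φ (N s a) := by
    intro s a
    have h3 := hdiff s a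
    rw [hQ s a, hQ' s a] at h3
    simp only [Φ] at *
    linear_combination -h3
  have hΦN : ∀ s (a b : A), Φ (N s a) = Φ (N s b) := by
    intro s a b
    have h1 := key s a
    have h2 := key s b
    have h : γ * Φ (N s a) = γ * Φ (N s b) := by linarith
    exact mul_left_cancel₀ (ne_of_gt hγ0) h
  have hone : ∀ u v, OneStepLinked T u v → Φ u = Φ v := by
    rintro u v ⟨s, a, b, hu, hv⟩
    have hu' : u = N s a := by
      by_contra h
      rw [hdet] at hu
      simp [h] at hu
    have hv' : v = N s b := by
      by_contra h
      rw [hdet] at hv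
      simp [h] at hv
    rw [hu', hv']
    exact hΦN s a b
  have hlink : ∀ u v, Linked T u v → Φ u = Φ v := by
    intro u v h
    induction h with
    | base h => exact hone _ _ h
    | step h1 h2 ih => exact ih.trans (hone _ _ h2)
  obtain ⟨s0⟩ := ‹Nonempty S›
  refine ⟨(1 - γ) * Φ s0, fun s => ?_⟩
  obtain ⟨a0⟩ := ‹Nonempty A›
  have h1 := key s a0
  have h2 : Φ s = Φ s0 := hlink _ _ (hdec s s0)
  have h3 : Φ (N s a0) = Φ s0 := hlink _ _ (hdec (N s a0) s0)
  rw [h2, h3] at h1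
  linear_combination -h1
end

section
/- Let (S, A, T) be a finite MDP whose transition dynamics are decomposable. Let a, b, c, d : S → ℝ be functions such that for all s ∈ S, α ∈ A and s' ∈ S with T(s'|s,α) > 0, we have a(s) − c(s) = b(s') − d(s'). Then there exists a constant k ∈ ℝ such that a(s) = c(s) + k and b(s) = d(s) + k for all s ∈ S. -/
theorem stmt13 {S A : Type*} [Fintype S] [Fintype A] [Nonempty S] [Nonempty A]
    (T : S → A → S → ℝ)
    (hT0 : ∀ s a s', 0 ≤ T s a s') (hT1 : ∀ s a, ∑ s', T s a s' = 1)
    (hdec : Decomposable T)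
    (a c b d : S → ℝ)
    (h : ∀ (s : S) (α : A) (s' : S), 0 < T s α s' → a s - c s = b s' - d s') :
    ∃ k : ℝ, (∀ s, a s = c s + k) ∧ (∀ s, b s = d s + k) := by
  -- any state is reached by some transition? No: but every state can transit somewhere.
  have hsucc : ∀ (s : S) (α : A), ∃ s', 0 < T s α s' := by
    intro s α
    by_contra hne
    push_neg at hne
    have hz : ∀ s', T s α s' = 0 := fun s' => le_antisymm (hne s') (hT0 s α s')
    have := hT1 s α
    simp [hz] at this
  -- linked states share the same b - d value
  have hlink : ∀ u v : S, Linked T u v → b u - d u = b v - d v := by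
    intro u v hl
    induction hl with
    | base h1 =>
      obtain ⟨s, α, β, hu, hv⟩ := h1
      rw [← h s α _ hu, ← h s β _ hv]
    | step hl h1 ih =>
      obtain ⟨s, α, β, hu, hv⟩ := h1
      rw [ih, ← h s α _ hu, ← h s β _ hv]
  obtain ⟨s₀⟩ := (inferInstance : Nonempty S)
  refine ⟨b s₀ - d s₀, ?_, ?_⟩
  · intro s
    obtain ⟨s', hs'⟩ := hsucc s (Classical.arbitrary A)
    have := h s (Classical.arbitrary A) s' hs'
    have h2 := hlink s' s₀ (hdec s' s₀)
    linarith
  · intro s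
    have := hlink s s₀ (hdec s s₀)
    linarith
end

section
/- Let (S, A, T, γ) be a finite MDP with γ ∈ (0,1), deterministic dynamics given by N : S × A → S, and decomposable transition dynamics. Let r : S → ℝ be a state-only ground-truth reward, and suppose g, h : S → ℝ satisfy, for every feasible transition (s, a, s') with s' = N(s,a), g(s) + γ h(s') − h(s) = A^soft_r(s,a) (i.e. the AIRL reward network f(s,a,s') = g(s) + γh(s') − h(s) attains the global optimum, the soft advantage of r). Then there exist constants k₁, k₂ ∈ ℝ such that g(s) = r(s) + k₁ and h(s) = V^soft_r(s) + k₂ for all s ∈ S. -/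
noncomputable def softValue {S A : Type*} [Fintype A] (Q : S → A → ℝ) (s : S) : ℝ :=
  Real.log (∑ a, Real.exp (Q s a))

section Linked

variable {S A : Type*} {T : S → A → S → ℝ}

theorem Linked.eq_of_oneStepLinked {β : Type*} {f : S → β}
    (hf : ∀ u v, OneStepLinked T u v → f u = f v) {u v : S} (h : Linked T u v) : f u = f v := by
  induction h with
  | base h => exact hf _ _ h
  | step _ h ih => exact ih.trans (hf _ _ h)

theorem Decomposable.exists_eq_const {β : Type*} [Nonempty β] {f : S → β} (hdec : Decomposable T)
    (hf : ∀ u v, OneStepLinked T u v → f u = f v) : ∃ c, ∀ s, f s = c := by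
  rcases isEmpty_or_nonempty S with _ | ⟨⟨s₀⟩⟩
  · exact ⟨Classical.arbitrary β, fun s => isEmptyElim s⟩
  · exact ⟨f s₀, fun s => (hdec s s₀).eq_of_oneStepLinked hf⟩

end Linked

section Deterministic

variable {S A : Type*} [DecidableEq S] {T : S → A → S → ℝ} {N : S → A → S}

theorem sum_mul_eq_of_deterministic [Fintype S]
    (hdet : ∀ s a s', T s a s' = if s' = N s a then 1 else 0) (f : S → ℝ) (s : S) (a : A) :
    ∑ s', T s a s' * f s' = f (N s a) := by
  simp [hdet]

theorem OneStepLinked.exists_eq_of_deterministic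
    (hdet : ∀ s a s', T s a s' = if s' = N s a then 1 else 0) {u v : S}
    (h : OneStepLinked T u v) : ∃ s a b, u = N s a ∧ v = N s b := by
  obtain ⟨s, a, b, hu, hv⟩ := h
  rw [hdet] at hu hv
  refine ⟨s, a, b, ?_, ?_⟩
  · by_contra hne
    simp [hne] at hu
  · by_contra hne
    simp [hne] at hv

end Deterministic

theorem stmt14_general {S A : Type*} [Fintype S] [Fintype A] [DecidableEq S] [Nonempty A]
    (T : S → A → S → ℝ)
    (γ : ℝ) (hγ0 : 0 < γ)
    -- deterministic dynamics given by `N`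
    (N : S → A → S) (hdet : ∀ s a s', T s a s' = if s' = N s a then 1 else 0)
    -- decomposable dynamics
    (hdec : Decomposable T)
    -- state-only ground-truth reward, viewed as `r(s,a,s') = r(s)`
    (r : S → ℝ)
    -- `Qr` is the (unique) fixed point of the soft Bellman operator for `r`
    (Qr : S → A → ℝ)
    (hQr : ∀ s a, Qr s a
      = ∑ s', T s a s' * (r s + γ * Real.log (∑ a', Real.exp (Qr s' a'))))
    -- the reward network `f(s,a,s') = g(s) + γ h(s') − h(s)` attains the global optimum,
    -- i.e. equals the soft advantage `A^soft_r(s,a)` on every feasible transition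
    (g h : S → ℝ)
    (hopt : ∀ s a, g s + γ * h (N s a) - h s
      = Qr s a - Real.log (∑ a', Real.exp (Qr s a'))) :
    ∃ k₁ k₂ : ℝ, (∀ s, g s = r s + k₁) ∧
      (∀ s, h s = Real.log (∑ a', Real.exp (Qr s a')) + k₂) := by
  have hQ : ∀ s a, Qr s a = r s + γ * softValue Qr (N s a) := fun s a =>
    (hQr s a).trans (sum_mul_eq_of_deterministic hdet (fun s' => r s + γ * softValue Qr s') s a)
  have hadv : ∀ s a, g s + γ * h (N s a) - h s = Qr s a - softValue Qr s := hopt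
  set φ : S → ℝ := fun s => h s - softValue Qr s with hφ
  have hshaping : ∀ s a, g s - r s = φ s - γ * φ (N s a) := fun s a => by
    rw [hφ]
    linarith [hadv s a, hQ s a]
  obtain ⟨c, hc⟩ := hdec.exists_eq_const (f := φ) fun u v huv => by
    obtain ⟨s, a, b, rfl, rfl⟩ := huv.exists_eq_of_deterministic hdet
    exact mul_left_cancel₀ hγ0.ne' (by linarith [hshaping s a, hshaping s b])
  refine ⟨(1 - γ) * c, c, fun s => ?_, fun s => ?_⟩
  · have hgr := hshaping s (Classical.arbitrary A)
    rw [hc, hc] at hgr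
    linarith
  · exact eq_add_of_sub_eq' (hc s)

theorem stmt14 {S A : Type*} [Fintype S] [Fintype A] [DecidableEq S] [Nonempty S] [Nonempty A]
    (T : S → A → S → ℝ)
    (hT0 : ∀ s a s', 0 ≤ T s a s') (hT1 : ∀ s a, ∑ s', T s a s' = 1)
    (γ : ℝ) (hγ0 : 0 < γ) (hγ1 : γ < 1)
    -- deterministic dynamics given by `N`
    (N : S → A → S) (hdet : ∀ s a s', T s a s' = if s' = N s a then 1 else 0)
    -- decomposable dynamics
    (hdec : Decomposable T)
    -- state-only ground-truth reward, viewed as `r(s,a,s') = r(s)`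
    (r : S → ℝ)
    -- `Qr` is the (unique) fixed point of the soft Bellman operator for `r`
    (Qr : S → A → ℝ)
    (hQr : ∀ s a, Qr s a
      = ∑ s', T s a s' * (r s + γ * Real.log (∑ a', Real.exp (Qr s' a'))))
    -- the reward network `f(s,a,s') = g(s) + γ h(s') − h(s)` attains the global optimum,
    -- i.e. equals the soft advantage `A^soft_r(s,a)` on every feasible transition
    (g h : S → ℝ)
    (hopt : ∀ s a, g s + γ * h (N s a) - h s
      = Qr s a - Real.log (∑ a', Real.exp (Qr s a'))) :
    ∃ k₁ k₂ : ℝ, (∀ s, g s = r s + k₁) ∧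
      (∀ s, h s = Real.log (∑ a', Real.exp (Qr s a')) + k₂) :=
  stmt14_general T γ hγ0 N hdet hdec r Qr hQr g h hopt
end
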